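/- An IP loop L is a RIF loop (every inner mapping θ satisfies (x⁻¹)θ = (xθ)⁻¹) if and only if L is flexible and satisfies R(x,y) = L(x⁻¹,y⁻¹) for all x, y, where R(x,y) = R(x)R(y)R(xy)⁻¹ and L(x,y) = L(x)L(y)L(yx)⁻¹. -/

import Mathlib

/-- A loop: a magma with two-sided identity and left/right division. -/
class Loop (M : Type*) extends Mul M, One M where
  ld : M → M → M
  rd : M → M → M
  mul_ld : ∀ x y : M, x * ld x y = y
  ld_mul : ∀ x y : M, ld x (x * y) = y
  rd_mul : ∀ x y : M, rd y x * x = y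
  mul_rd : ∀ x y : M, rd (y * x) x = y
  one_mul : ∀ x : M, 1 * x = x
  mul_one : ∀ x : M, x * 1 = x

/-- An inverse property (IP) loop. -/
class IPLoop (M : Type*) extends Loop M, Inv M where
  inv_mul_cancel_left : ∀ x y : M, x⁻¹ * (x * y) = y
  mul_inv_cancel_right : ∀ x y : M, (y * x) * x⁻¹ = y

/-- Left translation `L(x) : y ↦ x * y` as a permutation. -/
def Loop.Lperm {M : Type*} [Loop M] (x : M) : Equiv.Perm M :=
  ⟨fun y => x * y, fun y => Loop.ld x y, Loop.ld_mul x, Loop.mul_ld x⟩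

/-- Right translation `R(x) : y ↦ y * x` as a permutation. -/
def Loop.Rperm {M : Type*} [Loop M] (x : M) : Equiv.Perm M :=
  ⟨fun y => y * x, fun y => Loop.rd y x, fun y => Loop.mul_rd x y, fun y => Loop.rd_mul x y⟩

/-- The multiplication group: the subgroup of permutations generated by all translations. -/
def Loop.Mlt (M : Type*) [Loop M] : Subgroup (Equiv.Perm M) :=
  Subgroup.closure (Set.range (Loop.Lperm (M := M)) ∪ Set.range (Loop.Rperm (M := M)))

namespace RifAux

open Loop

section LoopFacts
variable {M : Type*} [Loop M]

theorem mul_left_cancel' {x a b : M} (h : x * a = x * b) : a = b := by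
  have := congrArg (Loop.ld x) h
  rwa [Loop.ld_mul, Loop.ld_mul] at this

theorem mul_right_cancel' {x a b : M} (h : a * x = b * x) : a = b := by
  have := congrArg (fun t => Loop.rd t x) h
  simpa only [Loop.mul_rd] using this

@[simp] theorem Lperm_apply (x z : M) : Loop.Lperm x z = x * z := rfl
@[simp] theorem Rperm_apply (x z : M) : Loop.Rperm x z = z * x := rfl
@[simp] theorem Lperm_inv_apply (x z : M) : (Loop.Lperm x)⁻¹ z = Loop.ld x z := rfl
@[simp] theorem Rperm_inv_apply (x z : M) : (Loop.Rperm x)⁻¹ z = Loop.rd z x := rfl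

theorem Rperm_one : Loop.Rperm (1 : M) = 1 := by
  apply Equiv.ext
  intro z
  simp [Loop.mul_one]

end LoopFacts

section IPFacts
variable {M : Type*} [IPLoop M]

theorem inv_mul (x : M) : x⁻¹ * x = 1 := by
  have := IPLoop.inv_mul_cancel_left x (1 : M)
  rwa [Loop.mul_one] at this

theorem mul_inv (x : M) : x * x⁻¹ = 1 := by
  have := IPLoop.mul_inv_cancel_right x (1 : M)
  rwa [Loop.one_mul] at this

theorem inv_inv' (x : M) : x⁻¹⁻¹ = x := by
  have := IPLoop.inv_mul_cancel_left x⁻¹ x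
  rwa [inv_mul, Loop.mul_one] at this

theorem mul_inv_cancel_left' (x y : M) : x * (x⁻¹ * y) = y := by
  have := IPLoop.inv_mul_cancel_left x⁻¹ y
  rwa [inv_inv'] at this

theorem inv_mul_cancel_right' (x y : M) : (y * x⁻¹) * x = y := by
  have := IPLoop.mul_inv_cancel_right x⁻¹ y
  rwa [inv_inv'] at this

theorem ld_eq (x y : M) : Loop.ld x y = x⁻¹ * y := by
  apply mul_left_cancel' (x := x)
  rw [Loop.mul_ld, mul_inv_cancel_left']

theorem rd_eq (x y : M) : Loop.rd y x = y * x⁻¹ := by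
  apply mul_right_cancel' (x := x)
  rw [Loop.rd_mul, inv_mul_cancel_right']

theorem mul_inv_rev' (x y : M) : (x * y)⁻¹ = y⁻¹ * x⁻¹ := by
  have h2 : y * (x * y)⁻¹ = x⁻¹ := by
    have := IPLoop.mul_inv_cancel_right (M := M) (x * y) x⁻¹
    rwa [IPLoop.inv_mul_cancel_left] at this
  calc (x * y)⁻¹ = y⁻¹ * (y * (x * y)⁻¹) := (IPLoop.inv_mul_cancel_left y _).symm
    _ = y⁻¹ * x⁻¹ := by rw [h2]

theorem one_inv : ((1 : M))⁻¹ = 1 := by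
  have := inv_mul (1 : M)
  rwa [Loop.mul_one] at this

end IPFacts

section Inner
variable {M : Type*} [IPLoop M]

/-- The inner mapping `T(x) = L(x)⁻¹ ∘ R(x)` (function composition). -/
def Tp (x : M) : Equiv.Perm M := (Loop.Lperm x)⁻¹ * Loop.Rperm x

/-- The inner mapping `R(x,y) = R(xy)⁻¹ ∘ R(y) ∘ R(x)`. -/
def Rp2 (x y : M) : Equiv.Perm M := (Loop.Rperm (x * y))⁻¹ * Loop.Rperm y * Loop.Rperm x

/-- The inner mapping `L(x,y) = L(yx)⁻¹ ∘ L(y) ∘ L(x)`. -/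
def Lp2 (x y : M) : Equiv.Perm M := (Loop.Lperm (y * x))⁻¹ * Loop.Lperm y * Loop.Lperm x

@[simp] theorem Tp_apply (x z : M) : Tp x z = Loop.ld x (z * x) := rfl
@[simp] theorem Tp_inv_apply (x z : M) : (Tp x)⁻¹ z = Loop.rd (x * z) x := rfl
@[simp] theorem Rp2_apply (x y z : M) : Rp2 x y z = Loop.rd ((z * x) * y) (x * y) := rfl
@[simp] theorem Lp2_apply (x y z : M) : Lp2 x y z = Loop.ld (y * x) (y * (x * z)) := rfl

/-- The generating set of the standard inner mapping group. -/
def S (M : Type*) [IPLoop M] : Set (Equiv.Perm M) :=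
  {σ | (∃ x, σ = Tp x) ∨ (∃ x y, σ = Rp2 x y) ∨ (∃ x y, σ = Lp2 x y)}

/-- The standard inner mapping group. -/
def H (M : Type*) [IPLoop M] : Subgroup (Equiv.Perm M) := Subgroup.closure (S M)

theorem Tp_mem (x : M) : Tp x ∈ H M := Subgroup.subset_closure (Or.inl ⟨x, rfl⟩)
theorem Rp2_mem (x y : M) : Rp2 x y ∈ H M :=
  Subgroup.subset_closure (Or.inr (Or.inl ⟨x, y, rfl⟩))
theorem Lp2_mem (x y : M) : Lp2 x y ∈ H M :=
  Subgroup.subset_closure (Or.inr (Or.inr ⟨x, y, rfl⟩))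

/-- Key identity (valid in any loop): `R(xb)⁻¹ L(x) R(b) = T(xb)⁻¹ L(b,x) T(b)`. -/
theorem L_conj_eq (x b : M) :
    (Loop.Rperm (x * b))⁻¹ * Loop.Lperm x * Loop.Rperm b = (Tp (x * b))⁻¹ * Lp2 b x * Tp b := by
  apply Equiv.ext
  intro z
  show Loop.rd (x * (z * b)) (x * b)
      = (Tp (x * b))⁻¹ (Lp2 b x (Tp b z))
  simp only [Tp_apply, Tp_inv_apply, Lp2_apply, Loop.mul_ld]

/-- Schreier-type key lemma: for any `θ` in the multiplication group and any `b`,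
`R(θ b)⁻¹ θ R(b)` lies in the standard inner mapping group. -/
theorem conj_mem {θ : Equiv.Perm M} (hθ : θ ∈ Loop.Mlt M) :
    ∀ b : M, (Loop.Rperm (θ b))⁻¹ * θ * Loop.Rperm b ∈ H M := by
  refine Subgroup.closure_induction
    (p := fun θ _ => ∀ b : M, (Loop.Rperm (θ b))⁻¹ * θ * Loop.Rperm b ∈ H M)
    ?_ ?_ ?_ ?_ hθ
  · rintro σ (⟨x, rfl⟩ | ⟨x, rfl⟩) b
    · -- σ = Lperm x
      have : (Loop.Rperm (Loop.Lperm x b))⁻¹ * Loop.Lperm x * Loop.Rperm b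
          = (Tp (x * b))⁻¹ * Lp2 b x * Tp b := L_conj_eq x b
      rw [this]
      exact mul_mem (mul_mem (inv_mem (Tp_mem _)) (Lp2_mem _ _)) (Tp_mem _)
    · -- σ = Rperm x
      have : (Loop.Rperm (Loop.Rperm x b))⁻¹ * Loop.Rperm x * Loop.Rperm b = Rp2 b x := rfl
      rw [this]
      exact Rp2_mem b x
  · intro b
    have h1 : ((1 : Equiv.Perm M) : Equiv.Perm M) b = b := rfl
    rw [h1, _root_.mul_one, inv_mul_cancel]
    exact one_mem _
  · intro σ τ hσc hτc hσ hτ b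
    have key : (Loop.Rperm ((σ * τ) b))⁻¹ * (σ * τ) * Loop.Rperm b
        = ((Loop.Rperm (σ (τ b)))⁻¹ * σ * Loop.Rperm (τ b))
          * ((Loop.Rperm (τ b))⁻¹ * τ * Loop.Rperm b) := by
      have : (σ * τ) b = σ (τ b) := rfl
      rw [this]; group
    rw [key]
    exact mul_mem (hσ (τ b)) (hτ b)
  · intro σ hσc hσ b
    have hb : σ (σ⁻¹ b) = b := σ.apply_symm_apply b
    have key : (Loop.Rperm (σ⁻¹ b))⁻¹ * σ⁻¹ * Loop.Rperm b
        = ((Loop.Rperm (σ (σ⁻¹ b)))⁻¹ * σ * Loop.Rperm (σ⁻¹ b))⁻¹ := by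
      rw [hb]; group
    rw [key]
    exact inv_mem (hσ (σ⁻¹ b))

/-- Any element of the multiplication group fixing `1` lies in the standard
inner mapping group. -/
theorem mem_H_of_fix {θ : Equiv.Perm M} (hθ : θ ∈ Loop.Mlt M) (h1 : θ 1 = 1) : θ ∈ H M := by
  have := conj_mem hθ 1
  rwa [h1, Rperm_one, _root_.mul_one, inv_one, _root_.one_mul] at this

end Inner

end RifAux

open RifAux Loop in
theorem rif_iff_flex_and_RL {M : Type*} [IPLoop M] :
    (∀ θ : Equiv.Perm M, θ ∈ Loop.Mlt M → θ 1 = 1 → ∀ x : M, θ x⁻¹ = (θ x)⁻¹) ↔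
      ((∀ x y : M, x * (y * x) = (x * y) * x) ∧
        ∀ x y z : M,
          Loop.rd ((z * x) * y) (x * y) = Loop.ld (y⁻¹ * x⁻¹) (y⁻¹ * (x⁻¹ * z))) := by
  constructor
  · intro h
    have hLmem : ∀ x : M, Loop.Lperm x ∈ Loop.Mlt M := fun x =>
      Subgroup.subset_closure (Or.inl ⟨x, rfl⟩)
    have hRmem : ∀ x : M, Loop.Rperm x ∈ Loop.Mlt M := fun x =>
      Subgroup.subset_closure (Or.inr ⟨x, rfl⟩)
    have hTmem : ∀ x : M, Tp x ∈ Loop.Mlt M := fun x =>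
      mul_mem (inv_mem (hLmem x)) (hRmem x)
    have hT1 : ∀ x : M, Tp x 1 = 1 := by
      intro x
      show Loop.ld x (1 * x) = 1
      rw [Loop.one_mul, ld_eq, inv_mul]
    -- T(x) semiautomorphic gives the key identity x⁻¹(zx) = (x⁻¹z)x
    have hTkey : ∀ x z : M, x⁻¹ * (z * x) = (x⁻¹ * z) * x := by
      intro x z
      have := h (Tp x) (hTmem x) (hT1 x) z⁻¹
      simp only [Tp_apply, ld_eq] at this
      -- this : x⁻¹ * (z⁻¹⁻¹ * x) = (x⁻¹ * (z⁻¹ * x))⁻¹... careful: θ x⁻¹ with x := z⁻¹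
      -- θ (z⁻¹)⁻¹ = (θ z⁻¹)⁻¹ : x⁻¹ * (z⁻¹⁻¹ * x) = (x⁻¹ * (z⁻¹ * x))⁻¹
      rw [inv_inv'] at this
      rw [this, mul_inv_rev', mul_inv_rev', inv_inv', inv_inv']
    constructor
    · -- flexibility
      intro x y
      have h1 : ∀ a b : M, a * (b * a⁻¹) = (a * b) * a⁻¹ := by
        intro a b
        have := hTkey a⁻¹ b
        rwa [inv_inv'] at this
      have h2 : x * y = (x * (y * x)) * x⁻¹ := by
        have := h1 x (y * x)
        rwa [IPLoop.mul_inv_cancel_right] at this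
      calc x * (y * x) = ((x * (y * x)) * x⁻¹) * x := (inv_mul_cancel_right' _ _).symm
        _ = (x * y) * x := by rw [← h2]
    · -- the R(x,y) = L(x⁻¹,y⁻¹) identity
      intro x y z
      have hmem : Rp2 x y ∈ Loop.Mlt M :=
        mul_mem (mul_mem (inv_mem (hRmem (x * y))) (hRmem y)) (hRmem x)
      have h1 : Rp2 x y 1 = 1 := by
        show Loop.rd ((1 * x) * y) (x * y) = 1
        rw [Loop.one_mul, rd_eq, RifAux.mul_inv]
      have := h (Rp2 x y) hmem h1 z⁻¹
      rw [inv_inv'] at this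
      simp only [Rp2_apply] at this
      rw [this]
      simp only [rd_eq, ld_eq, mul_inv_rev', inv_inv']
  · rintro ⟨hflex, hid⟩ θ hθ h1 x
    -- flexibility in the useful form
    have hTkey : ∀ a b : M, a⁻¹ * (b * a) = (a⁻¹ * b) * a := by
      intro a b
      apply mul_left_cancel' (x := a)
      rw [mul_inv_cancel_left', hflex a (a⁻¹ * b), mul_inv_cancel_left']
    have hH : θ ∈ H M := mem_H_of_fix hθ h1
    revert x
    refine Subgroup.closure_induction
      (p := fun θ _ => ∀ x : M, θ x⁻¹ = (θ x)⁻¹) ?_ ?_ ?_ ?_ hH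
    · rintro σ (⟨a, rfl⟩ | ⟨a, b, rfl⟩ | ⟨a, b, rfl⟩) z
      · -- T(a)
        simp only [Tp_apply, ld_eq, mul_inv_rev', inv_inv']
        exact hTkey a z⁻¹
      · -- R(a,b)
        simp only [Rp2_apply]
        rw [hid a b z⁻¹]
        simp only [rd_eq, ld_eq, mul_inv_rev', inv_inv']
      · -- L(a,b)
        simp only [Lp2_apply]
        have key := hid a⁻¹ b⁻¹ z⁻¹
        simp only [inv_inv'] at key
        rw [← key]
        simp only [rd_eq, ld_eq, mul_inv_rev', inv_inv']
    · intro z; rfl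
    · intro σ τ _ _ hσ hτ z
      have : (σ * τ) z⁻¹ = σ (τ z⁻¹) := rfl
      rw [this, hτ z, hσ (τ z)]; rfl
    · intro σ _ hσ z
      apply σ.injective
      rw [Equiv.Perm.coe_inv, Equiv.apply_symm_apply]
      have := hσ (σ⁻¹ z)
      rw [Equiv.Perm.coe_inv, Equiv.apply_symm_apply] at this
      rw [this]
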